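/- arXiv:2009.02272 — 3 statements merged into one kernel-verified Lean document; each statement's English description precedes it below -/
import Mathlib

section
/- For every natural number n, p^B_{n,n+1}(x) = x·B_n(x); equivalently, p^B_{n,n+1}(x) = (1−x)^{n+1} · Σ_{m≥1} (2m−1)^n x^m in ℝ⟦x⟧. -/
open Polynomial PowerSeries

/-- The polynomials `p^B_{n,k}` defined recursively as in
Proposition (e): `p^B_{0,0} = 1`, `p^B_{0,1} = x`,
`p^B_{n+1,0} = ∑_{i=0}^{n+1} p^B_{n,i}`,
`p^B_{n+1,k} = 2x ∑_{i=0}^{k-1} p^B_{n,i} + 2 ∑_{i=k}^{n+1} p^B_{n,i}` for `1 ≤ k ≤ n+1`, and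
`p^B_{n+1,n+2} = x ∑_{i=0}^{n+1} p^B_{n,i}`. -/
noncomputable def pB : ℕ → ℕ → Polynomial ℝ
  | 0, 0 => 1
  | 0, 1 => Polynomial.X
  | 0, _ + 2 => 0
  | n + 1, 0 => ∑ i ∈ Finset.range (n + 2), pB n i
  | n + 1, k + 1 =>
      if k + 1 ≤ n + 1 then
        2 * Polynomial.X * (∑ i ∈ Finset.range (k + 1), pB n i) +
          2 * ∑ i ∈ Finset.Icc (k + 1) (n + 1), pB n i
      else if k + 1 = n + 2 then
        Polynomial.X * ∑ i ∈ Finset.range (n + 2), pB n i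
      else 0
  termination_by n _ => n

/-- Auxiliary coefficient functions. -/
noncomputable def G (n k m : ℕ) : ℝ :=
  if k = 0 then (2*(m:ℝ)+1)^n
  else if k ≤ n then 4*(m:ℝ)*(2*(m:ℝ)+1)^(n-k)*(2*(m:ℝ)-1)^(k-1)
  else if k = n+1 then (if m = 0 then 0 else (2*(m:ℝ)-1)^n)
  else 0

lemma G_zero (n m : ℕ) : G n 0 m = (2*(m:ℝ)+1)^n := by simp [G]

lemma G_mid (n k m : ℕ) (h1 : 1 ≤ k) (h2 : k ≤ n) :
    G n k m = 4*(m:ℝ)*(2*(m:ℝ)+1)^(n-k)*(2*(m:ℝ)-1)^(k-1) := by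
  unfold G
  rw [if_neg (by omega), if_pos h2]

lemma G_top (n m : ℕ) : G n (n+1) m = if m = 0 then 0 else (2*(m:ℝ)-1)^n := by
  unfold G
  rw [if_neg (by omega), if_neg (by omega), if_pos rfl]

lemma G_big (n k m : ℕ) (h : n + 1 < k) : G n k m = 0 := by
  unfold G
  rw [if_neg (by omega), if_neg (by omega), if_neg (by omega)]

lemma G_m0 (n i : ℕ) (hi : 1 ≤ i) : G n i 0 = 0 := by
  unfold G
  rw [if_neg (by omega)]
  split_ifs <;> simp_all

lemma sumA (n k m : ℕ) (h : k ≤ n) :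
    ∑ i ∈ Finset.range (k+1), G n i m
      = (2*(m:ℝ)+1)^n + 2*(m:ℝ)*(2*(m:ℝ)+1)^(n-k)*((2*(m:ℝ)+1)^k - (2*(m:ℝ)-1)^k) := by
  induction k with
  | zero => simp [G_zero]
  | succ k ih =>
      rw [Finset.sum_range_succ, ih (by omega), G_mid n (k+1) m (by omega) h]
      have he : n - k = (n - (k+1)) + 1 := by omega
      rw [he]
      simp only [Nat.add_sub_cancel]
      ring

lemma sumS (n m : ℕ) :
    ∑ i ∈ Finset.range (n+2), G n i m
      = if m = 0 then 1 else (2*(m:ℝ)+1)^(n+1) - (2*(m:ℝ)-1)^(n+1) := by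
  rw [Finset.sum_range_succ, sumA n n m le_rfl, G_top, Nat.sub_self]
  rcases Nat.eq_zero_or_pos m with hm | hm
  · subst hm; norm_num
  · rw [if_neg (by omega), if_neg (by omega)]
    ring

lemma sumB (n k m : ℕ) (h : k ≤ n + 2) :
    ∑ i ∈ Finset.range k, G n i m + ∑ i ∈ Finset.Icc k (n+1), G n i m
      = ∑ i ∈ Finset.range (n+2), G n i m := by
  rw [← Finset.Ico_add_one_right_eq_Icc, Finset.range_eq_Ico, Finset.range_eq_Ico]
  exact Finset.sum_Ico_consecutive (fun i => G n i m) (Nat.zero_le _) (by omega)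

lemma mk_sum (s : Finset ℕ) (f : ℕ → ℕ → ℝ) :
    ∑ i ∈ s, PowerSeries.mk (f i) = PowerSeries.mk (fun m => ∑ i ∈ s, f i m) := by
  ext m
  rw [map_sum]
  simp [PowerSeries.coeff_mk]

lemma mk_zero_eq : PowerSeries.mk (fun _ => (0:ℝ)) = 0 := by
  ext m; simp

lemma coe_sum (s : Finset ℕ) (f : ℕ → ℝ[X]) :
    ((∑ i ∈ s, f i : ℝ[X]) : ℝ⟦X⟧) = ∑ i ∈ s, (f i : ℝ⟦X⟧) := by
  simp only [← Polynomial.coeToPowerSeries.ringHom_apply, map_sum]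

lemma coe_two : ((2 : ℝ[X]) : ℝ⟦X⟧) = 2 := by
  simp only [← Polynomial.coeToPowerSeries.ringHom_apply, map_ofNat]

lemma coeff_one_sub_X_mul (f : ℝ⟦X⟧) (m : ℕ) :
    PowerSeries.coeff m ((1 - PowerSeries.X) * f)
      = PowerSeries.coeff m f - if m = 0 then 0 else PowerSeries.coeff (m-1) f := by
  rw [sub_mul, one_mul, map_sub]
  cases m with
  | zero => simp
  | succ m => simp [PowerSeries.coeff_succ_X_mul]

lemma coeff_two_mul (f : ℝ⟦X⟧) (m : ℕ) :
    PowerSeries.coeff m (2 * f) = 2 * PowerSeries.coeff m f := by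
  rw [← map_ofNat (PowerSeries.C (R := ℝ)) 2, PowerSeries.coeff_C_mul]

lemma one_sub_X_ne : (1 - PowerSeries.X : ℝ⟦X⟧) ≠ 0 := by
  intro h
  have := congrArg (PowerSeries.constantCoeff (R := ℝ)) h
  simp at this

lemma key : ∀ n k, (pB n k : ℝ⟦X⟧)
    = (1 - PowerSeries.X)^(n+1) * PowerSeries.mk (fun m => G n k m) := by
  intro n
  induction n with
  | zero =>
      intro k
      match k with
      | 0 =>
          rw [show pB 0 0 = 1 by rw [pB], Polynomial.coe_one, pow_one]
          ext m
          rw [coeff_one_sub_X_mul]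
          cases m with
          | zero => simp [G_zero]
          | succ m => simp [G_zero]
      | 1 =>
          rw [show pB 0 1 = Polynomial.X by rw [pB], Polynomial.coe_X, pow_one]
          ext m
          rw [coeff_one_sub_X_mul]
          simp only [PowerSeries.coeff_mk, PowerSeries.coeff_X, G_top]
          match m with
          | 0 => norm_num
          | 1 => norm_num
          | (m+2) =>
              rw [if_neg (by omega : ¬ m+2 = 1), if_neg (by omega : ¬ m+2 = 0),
                if_neg (by omega : ¬ m+2 = 0)]
              norm_num
      | (k+2) =>
          rw [show pB 0 (k+2) = 0 by rw [pB], Polynomial.coe_zero]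
          have : (fun m => G 0 (k+2) m) = fun _ => (0:ℝ) := by
            funext m; exact G_big 0 (k+2) m (by omega)
          rw [this, mk_zero_eq, mul_zero]
  | succ n IH =>
      intro k
      match k with
      | 0 =>
          rw [show pB (n+1) 0 = ∑ i ∈ Finset.range (n + 2), pB n i from by rw [pB]]
          rw [coe_sum]
          simp only [IH]
          rw [← Finset.mul_sum, mk_sum]
          suffices h : PowerSeries.mk (fun m => ∑ i ∈ Finset.range (n+2), G n i m)
              = (1 - PowerSeries.X) * PowerSeries.mk (fun m => G (n+1) 0 m) by
            linear_combination ((1 - PowerSeries.X)^(n+1)) * h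
          ext m
          rw [coeff_one_sub_X_mul]
          simp only [PowerSeries.coeff_mk, sumS, G_zero]
          cases m with
          | zero => norm_num
          | succ m =>
              rw [if_neg (by omega), if_neg (by omega)]
              simp only [Nat.add_sub_cancel]
              push_cast
              ring
      | (k+1) =>
          rcases lt_trichotomy (k+1) (n+2) with hk | hk | hk
          · -- middle case : k + 1 ≤ n + 1
            have hk' : k ≤ n := by omega
            rw [show pB (n+1) (k+1)
                = 2 * Polynomial.X * (∑ i ∈ Finset.range (k + 1), pB n i) +
                  2 * ∑ i ∈ Finset.Icc (k + 1) (n + 1), pB n i by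
              rw [pB, if_pos (by omega)]]
            simp only [Polynomial.coe_add, Polynomial.coe_mul, Polynomial.coe_X,
              coe_two, coe_sum]
            simp only [IH]
            rw [← Finset.mul_sum, ← Finset.mul_sum, mk_sum, mk_sum]
            suffices h : (1 - PowerSeries.X) * PowerSeries.mk (fun m => G (n+1) (k+1) m)
                = 2 * PowerSeries.X * PowerSeries.mk (fun m => ∑ i ∈ Finset.range (k+1), G n i m)
                  + 2 * PowerSeries.mk (fun m => ∑ i ∈ Finset.Icc (k+1) (n+1), G n i m) by
              linear_combination (-((1 - PowerSeries.X)^(n+1))) * h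
            ext m
            rw [coeff_one_sub_X_mul, map_add, mul_assoc, coeff_two_mul, coeff_two_mul]
            have hB : ∀ j, ∑ i ∈ Finset.Icc (k+1) (n+1), G n i j
                = (∑ i ∈ Finset.range (n+2), G n i j) - ∑ i ∈ Finset.range (k+1), G n i j := by
              intro j
              rw [← sumB n (k+1) j (by omega)]
              ring
            cases m with
            | zero =>
                rw [if_pos rfl]
                simp only [PowerSeries.coeff_zero_X_mul, PowerSeries.coeff_mk,
                  G_mid (n+1) (k+1) 0 (by omega) (by omega), hB, sumS,
                  sumA n k 0 hk', G_zero]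
                norm_num
            | succ m =>
                rw [if_neg (by omega)]
                simp only [Nat.add_sub_cancel, PowerSeries.coeff_succ_X_mul,
                  PowerSeries.coeff_mk,
                  G_mid (n+1) (k+1) (m+1) (by omega) (by omega),
                  G_mid (n+1) (k+1) m (by omega) (by omega), hB, sumS,
                  sumA n k m hk', sumA n k (m+1) hk']
                rw [if_neg (by omega)]
                obtain ⟨e, rfl⟩ : ∃ e, n = k + e := ⟨n - k, by omega⟩
                simp only [show k + e + 1 - (k + 1) = e from by omega,
                  show k + e - k = e from by omega,
                  show k + 1 - 1 = k from by omega]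
                push_cast
                ring
          · -- top case : k + 1 = n + 2
            have hkn : k = n + 1 := by omega
            subst hkn
            rw [show pB (n+1) (n+2)
                = Polynomial.X * ∑ i ∈ Finset.range (n + 2), pB n i by
              rw [pB, if_neg (by omega), if_pos rfl]]
            rw [Polynomial.coe_mul, Polynomial.coe_X, coe_sum]
            simp only [IH]
            rw [← Finset.mul_sum, mk_sum]
            suffices h : (1 - PowerSeries.X) * PowerSeries.mk (fun m => G (n+1) (n+2) m)
                = PowerSeries.X * PowerSeries.mk (fun m => ∑ i ∈ Finset.range (n+2), G n i m) by
              linear_combination (-((1 - PowerSeries.X)^(n+1))) * h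
            ext m
            rw [coeff_one_sub_X_mul]
            have hGtop : ∀ j, G (n+1) (n+2) j = if j = 0 then 0 else (2*(j:ℝ)-1)^(n+1) :=
              fun j => G_top (n+1) j
            cases m with
            | zero => simp [hGtop]
            | succ m =>
                rw [if_neg (by omega)]
                simp only [Nat.add_sub_cancel, PowerSeries.coeff_succ_X_mul,
                  PowerSeries.coeff_mk, hGtop, sumS]
                cases m with
                | zero => norm_num
                | succ m =>
                    rw [if_neg (by omega), if_neg (by omega), if_neg (by omega)]
                    push_cast
                    ring
          · -- zero case : k + 1 > n + 2
            rw [show pB (n+1) (k+1) = 0 by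
              rw [pB, if_neg (by omega), if_neg (by omega)]]
            have : (fun m => G (n+1) (k+1) m) = fun _ => (0:ℝ) := by
              funext m; exact G_big (n+1) (k+1) m (by omega)
            rw [this, mk_zero_eq, mul_zero, Polynomial.coe_zero]

/-- `p^B_{n,n+1}(x) = x ⬝ B_n(x)`; equivalently,
`p^B_{n,n+1}(x) = (1-x)^{n+1} ⬝ ∑_{m ≥ 1} (2m-1)^n x^m` in `ℝ⟦x⟧`.  Here `B` is the type `B`
Eulerian polynomial, determined by `∑_{m ≥ 0} (2m+1)^n x^m = B_n(x)/(1-x)^{n+1}`. -/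
theorem pB_top (n : ℕ) (B : Polynomial ℝ)
    (hB : (B : PowerSeries ℝ) =
      (1 - PowerSeries.X) ^ (n + 1) * PowerSeries.mk (fun m => ((2 * m + 1 : ℝ)) ^ n)) :
    pB n (n + 1) = Polynomial.X * B ∧
      (pB n (n + 1) : PowerSeries ℝ) =
        (1 - PowerSeries.X) ^ (n + 1) *
          PowerSeries.mk (fun m => if m = 0 then 0 else (2 * m - 1 : ℝ) ^ n) := by
  have hmk : PowerSeries.mk (fun m => G n (n+1) m)
      = PowerSeries.mk (fun m : ℕ => if m = 0 then 0 else (2 * (m:ℝ) - 1) ^ n) := by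
    ext m
    rw [PowerSeries.coeff_mk, PowerSeries.coeff_mk, G_top]
  have h2 : (pB n (n + 1) : PowerSeries ℝ) =
      (1 - PowerSeries.X) ^ (n + 1) *
        PowerSeries.mk (fun m => if m = 0 then 0 else (2 * m - 1 : ℝ) ^ n) := by
    rw [key n (n+1), hmk]
  refine ⟨?_, h2⟩
  rw [← Polynomial.coe_inj, Polynomial.coe_mul, Polynomial.coe_X, h2, hB]
  have hX : PowerSeries.mk (fun m : ℕ => if m = 0 then 0 else (2 * (m:ℝ) - 1) ^ n)
      = PowerSeries.X * PowerSeries.mk (fun m : ℕ => (2 * (m:ℝ) + 1) ^ n) := by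
    ext m
    cases m with
    | zero => simp
    | succ m =>
        rw [PowerSeries.coeff_succ_X_mul]
        simp only [PowerSeries.coeff_mk]
        rw [if_neg (by omega)]
        push_cast
        ring
  rw [hX]
  ring
end

section
/- For every natural number n, the degree of p^B_{n,n+1}(x) equals n+1, and for every k ∈ {0,1,…,n} the degree of p^B_{n,k}(x) equals n. -/
open Polynomial PowerSeries

def Bdeg (n k : ℕ) : ℕ := if k ≤ n then n else n + 1

lemma Bdeg_le (n k : ℕ) : Bdeg n k ≤ n + 1 := by
  unfold Bdeg; split <;> omega

lemma coeff_two_mul_s6 (p : Polynomial ℝ) (i : ℕ) :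
    ((2 : Polynomial ℝ) * p).coeff i = 2 * p.coeff i := by
  have h : (2 : Polynomial ℝ) = Polynomial.C 2 := (Polynomial.C_eq_natCast 2).symm
  rw [h, Polynomial.coeff_C_mul]

lemma coeff_X_mul' (p : Polynomial ℝ) : ∀ i, (Polynomial.X * p).coeff i =
    if i = 0 then 0 else p.coeff (i - 1)
  | 0 => by simp [Polynomial.mul_coeff_zero]
  | i + 1 => by simp [Polynomial.coeff_X_mul]

lemma pB_key : ∀ n k, k ≤ n + 1 →
    (∀ i, 0 ≤ (pB n k).coeff i) ∧
    (∀ i, Bdeg n k < i → (pB n k).coeff i = 0) ∧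
    0 < (pB n k).coeff (Bdeg n k) := by
  intro n
  induction n with
  | zero =>
    intro k hk
    interval_cases k <;>
      simp [pB, Bdeg, Polynomial.coeff_one, Polynomial.coeff_X] <;>
      constructor
    · intro i; split <;> norm_num
    · intro i hi; omega
    · intro i; split <;> norm_num
    · intro i hi h; omega
  | succ n ih =>
    intro k hk
    have hBle : ∀ i, Bdeg n i ≤ n + 1 := fun i => Bdeg_le n i
    match k with
    | 0 =>
      have hB : Bdeg (n+1) 0 = n + 1 := by unfold Bdeg; simp
      rw [hB]
      have hpb : pB (n+1) 0 = ∑ i ∈ Finset.range (n + 2), pB n i := by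
        simp [pB]
      rw [hpb]
      refine ⟨?_, ?_, ?_⟩
      · intro i
        rw [Polynomial.finset_sum_coeff]
        exact Finset.sum_nonneg fun j _ => (ih j (by
          have := Finset.mem_range.mp ‹_›; omega)).1 i
      · intro i hi
        rw [Polynomial.finset_sum_coeff]
        refine Finset.sum_eq_zero fun j hj => ?_
        exact (ih j (by have := Finset.mem_range.mp hj; omega)).2.1 i
          (lt_of_le_of_lt (hBle j) hi)
      · rw [Polynomial.finset_sum_coeff]
        refine Finset.sum_pos' (fun j hj => (ih j (by
            have := Finset.mem_range.mp hj; omega)).1 _) ⟨n+1, ?_, ?_⟩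
        · simp
        · have h := (ih (n+1) le_rfl).2.2
          have : Bdeg n (n+1) = n+1 := by unfold Bdeg; simp
          rwa [this] at h
    | k + 1 =>
      have hpb : pB (n+1) (k+1) =
          if k + 1 ≤ n + 1 then
            2 * Polynomial.X * (∑ i ∈ Finset.range (k + 1), pB n i) +
              2 * ∑ i ∈ Finset.Icc (k + 1) (n + 1), pB n i
          else if k + 1 = n + 2 then
            Polynomial.X * ∑ i ∈ Finset.range (n + 2), pB n i
          else 0 := by
        simp [pB]
      by_cases h : k + 1 ≤ n + 1
      · rw [if_pos h] at hpb
        have hB : Bdeg (n+1) (k+1) = n + 1 := by unfold Bdeg; rw [if_pos h]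
        rw [hB, hpb]
        set S1 := ∑ i ∈ Finset.range (k + 1), pB n i with hS1
        set S2 := ∑ i ∈ Finset.Icc (k + 1) (n + 1), pB n i with hS2
        have hS1nonneg : ∀ i, 0 ≤ S1.coeff i := by
          intro i
          rw [hS1, Polynomial.finset_sum_coeff]
          refine Finset.sum_nonneg fun j hj => (ih j ?_).1 i
          have := Finset.mem_range.mp hj; omega
        have hS2nonneg : ∀ i, 0 ≤ S2.coeff i := by
          intro i
          rw [hS2, Polynomial.finset_sum_coeff]
          refine Finset.sum_nonneg fun j hj => (ih j ?_).1 i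
          have := (Finset.mem_Icc.mp hj).2; omega
        have hS1van : ∀ i, n < i → S1.coeff i = 0 := by
          intro i hi
          rw [hS1, Polynomial.finset_sum_coeff]
          refine Finset.sum_eq_zero fun j hj => ?_
          have hjk := Finset.mem_range.mp hj
          refine (ih j (by omega)).2.1 i ?_
          have : Bdeg n j = n := by unfold Bdeg; rw [if_pos (by omega)]
          omega
        have hS2van : ∀ i, n + 1 < i → S2.coeff i = 0 := by
          intro i hi
          rw [hS2, Polynomial.finset_sum_coeff]
          refine Finset.sum_eq_zero fun j hj => ?_
          have hjm := Finset.mem_Icc.mp hj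
          exact (ih j (by omega)).2.1 i (lt_of_le_of_lt (hBle j) hi)
        have key : ∀ i, (2 * Polynomial.X * S1 + 2 * S2).coeff i =
            2 * (Polynomial.X * S1).coeff i + 2 * S2.coeff i := by
          intro i
          rw [Polynomial.coeff_add, mul_assoc, coeff_two_mul_s6, coeff_two_mul_s6]
        refine ⟨?_, ?_, ?_⟩
        · intro i
          rw [key, coeff_X_mul']
          split
          · have := hS2nonneg i; positivity
          · have := hS1nonneg (i-1); have := hS2nonneg i; positivity
        · intro i hi
          rw [key, coeff_X_mul', if_neg (by omega), hS1van (i-1) (by omega),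
            hS2van i hi]
          ring
        · rw [key, coeff_X_mul', if_neg (by omega)]
          have h1 : 0 ≤ 2 * S1.coeff (n + 1 - 1) := by
            have := hS1nonneg (n+1-1); positivity
          have h2 : 0 < 2 * S2.coeff (n + 1) := by
            have hpos : 0 < S2.coeff (n+1) := by
              rw [hS2, Polynomial.finset_sum_coeff]
              refine Finset.sum_pos' (fun j hj => (ih j (by
                  have := (Finset.mem_Icc.mp hj).2; omega)).1 _) ⟨n+1, ?_, ?_⟩
              · rw [Finset.mem_Icc]; omega
              · have h := (ih (n+1) le_rfl).2.2
                have hb : Bdeg n (n+1) = n+1 := by unfold Bdeg; simp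
                rwa [hb] at h
            linarith
          linarith
      · have hk2 : k + 1 = n + 2 := by omega
        rw [if_neg h, if_pos hk2] at hpb
        have hB : Bdeg (n+1) (k+1) = n + 2 := by unfold Bdeg; rw [if_neg (by omega)]
        rw [hB, hpb]
        set S := ∑ i ∈ Finset.range (n + 2), pB n i with hS
        have hSnonneg : ∀ i, 0 ≤ S.coeff i := by
          intro i
          rw [hS, Polynomial.finset_sum_coeff]
          refine Finset.sum_nonneg fun j hj => (ih j ?_).1 i
          have := Finset.mem_range.mp hj; omega
        have hSvan : ∀ i, n + 1 < i → S.coeff i = 0 := by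
          intro i hi
          rw [hS, Polynomial.finset_sum_coeff]
          refine Finset.sum_eq_zero fun j hj => ?_
          have := Finset.mem_range.mp hj
          exact (ih j (by omega)).2.1 i (lt_of_le_of_lt (hBle j) hi)
        refine ⟨?_, ?_, ?_⟩
        · intro i
          rw [coeff_X_mul']
          split
          · exact le_refl 0
          · exact hSnonneg (i-1)
        · intro i hi
          rw [coeff_X_mul', if_neg (by omega)]
          exact hSvan (i-1) (by omega)
        · rw [coeff_X_mul', if_neg (by omega)]
          have : n + 2 - 1 = n + 1 := by omega
          rw [this, hS, Polynomial.finset_sum_coeff]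
          refine Finset.sum_pos' (fun j hj => (ih j (by
              have := Finset.mem_range.mp hj; omega)).1 _) ⟨n+1, by simp, ?_⟩
          have hp := (ih (n+1) le_rfl).2.2
          have hb : Bdeg n (n+1) = n+1 := by unfold Bdeg; simp
          rwa [hb] at hp

/-- The degree of `p^B_{n,n+1}` equals `n+1`, while the degree of `p^B_{n,k}` equals `n`
for every `k ∈ {0,1,…,n}`. -/
theorem pB_natDegree (n : ℕ) :
    (pB n (n + 1)).natDegree = n + 1 ∧ ∀ k ≤ n, (pB n k).natDegree = n := by
  constructor
  · have h := pB_key n (n+1) le_rfl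
    have hb : Bdeg n (n+1) = n+1 := by unfold Bdeg; simp
    rw [hb] at h
    exact le_antisymm (Polynomial.natDegree_le_iff_coeff_eq_zero.mpr h.2.1)
      (Polynomial.le_natDegree_of_ne_zero (ne_of_gt h.2.2))
  · intro k hk
    have h := pB_key n k (by omega)
    have hb : Bdeg n k = n := by unfold Bdeg; rw [if_pos hk]
    rw [hb] at h
    exact le_antisymm (Polynomial.natDegree_le_iff_coeff_eq_zero.mpr h.2.1)
      (Polynomial.le_natDegree_of_ne_zero (ne_of_gt h.2.2))
end

section
/- For every natural number n and every k ∈ {0,1,…,n+1}, write p^B_{n,k}(x) = Σ_{i=0}^{n+1} a_i x^i. Then the coefficient sequence (a_0, a_1, …, a_{n+1}) is unimodal with a peak at position p, i.e., a_0 ≤ a_1 ≤ ⋯ ≤ a_p and a_p ≥ a_{p+1} ≥ ⋯ ≥ a_{n+1}, where p = (n+1)/2 if n is odd, p = n/2 if n is even and k ≤ n/2, and p = n/2 + 1 if n is even and k ≥ n/2 + 1. -/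
open Polynomial PowerSeries

lemma pB_zero_zero : pB 0 0 = 1 := by rw [pB.eq_def]
lemma pB_zero_one : pB 0 1 = Polynomial.X := by rw [pB.eq_def]
lemma pB_zero_big (k : ℕ) : pB 0 (k+2) = 0 := by rw [pB.eq_def]

lemma pB_succ_zero (n : ℕ) : pB (n+1) 0 = ∑ i ∈ Finset.range (n+2), pB n i := by
  rw [pB.eq_def]

lemma pB_succ_mid (n k : ℕ) (h1 : 1 ≤ k) (h2 : k ≤ n+1) :
    pB (n+1) k = 2 * Polynomial.X * (∑ i ∈ Finset.range k, pB n i) +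
      2 * ∑ i ∈ Finset.Icc k (n+1), pB n i := by
  obtain ⟨k, rfl⟩ := Nat.exists_eq_add_of_le h1
  rw [Nat.add_comm 1 k, pB.eq_def]
  simp only []
  rw [if_pos (by omega : k + 1 ≤ n + 1)]

lemma pB_succ_last (n : ℕ) : pB (n+1) (n+2) = Polynomial.X * ∑ i ∈ Finset.range (n+2), pB n i := by
  rw [show n+2 = (n+1)+1 from rfl, pB.eq_def]
  simp only []
  rw [if_neg (by omega), if_pos trivial]

lemma two_mul_coeff (p : Polynomial ℝ) (i : ℕ) : (2 * p).coeff i = 2 * p.coeff i := by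
  rw [show (2 : Polynomial ℝ) = Polynomial.C 2 from rfl, Polynomial.coeff_C_mul]

lemma coeff_mid_succ (n k : ℕ) (h1 : 1 ≤ k) (h2 : k ≤ n+1) (i : ℕ) :
    (pB (n+1) k).coeff (i+1) = 2 * (∑ j ∈ Finset.range k, (pB n j).coeff i) +
      2 * ∑ j ∈ Finset.Icc k (n+1), (pB n j).coeff (i+1) := by
  rw [pB_succ_mid n k h1 h2, Polynomial.coeff_add, mul_assoc, two_mul_coeff, two_mul_coeff,
    Polynomial.coeff_X_mul, Polynomial.finset_sum_coeff, Polynomial.finset_sum_coeff]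

lemma coeff_mid_zero (n k : ℕ) (h1 : 1 ≤ k) (h2 : k ≤ n+1) :
    (pB (n+1) k).coeff 0 = 2 * ∑ j ∈ Finset.Icc k (n+1), (pB n j).coeff 0 := by
  rw [pB_succ_mid n k h1 h2, Polynomial.coeff_add, mul_assoc, two_mul_coeff, two_mul_coeff,
    Polynomial.mul_coeff_zero, Polynomial.coeff_X_zero, Polynomial.finset_sum_coeff]
  simp

lemma pB_big (n k : ℕ) (h : n+1 < k) : pB n k = 0 := by
  cases n with
  | zero =>
    obtain ⟨k, rfl⟩ : ∃ k', k = k' + 2 := ⟨k - 2, by omega⟩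
    exact pB_zero_big k
  | succ n =>
    obtain ⟨k, rfl⟩ : ∃ k', k = k' + 1 := ⟨k - 1, by omega⟩
    rw [pB.eq_def]
    simp only []
    rw [if_neg (by omega), if_neg (by omega)]

lemma pB_coeff_zero : ∀ n k i, n+1 < i → (pB n k).coeff i = 0 := by
  intro n
  induction n with
  | zero =>
    intro k i hi
    match k with
    | 0 => rw [pB_zero_zero, Polynomial.coeff_one, if_neg (by omega)]
    | 1 => rw [pB_zero_one, Polynomial.coeff_X, if_neg (by omega)]
    | (k+2) => rw [pB_zero_big]; simp
  | succ n ih =>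
    intro k i hi
    obtain ⟨i, rfl⟩ : ∃ i', i = i' + 1 := ⟨i - 1, by omega⟩
    rcases Nat.lt_or_ge (n+2) k with h | h
    · rw [pB_big _ _ h]; simp
    rcases Nat.eq_or_lt_of_le h with rfl | h
    · rw [pB_succ_last, Polynomial.coeff_X_mul, Polynomial.finset_sum_coeff]
      exact Finset.sum_eq_zero fun j _ => ih j i (by omega)
    rcases Nat.eq_zero_or_pos k with rfl | hk
    · rw [pB_succ_zero, Polynomial.finset_sum_coeff]
      exact Finset.sum_eq_zero fun j _ => ih j _ (by omega)
    · rw [coeff_mid_succ n k hk (by omega)]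
      rw [Finset.sum_eq_zero fun j _ => ih j i (by omega),
        Finset.sum_eq_zero fun j _ => ih j (i+1) (by omega)]
      ring

lemma pB_coeff_nonneg : ∀ n k i, 0 ≤ (pB n k).coeff i := by
  intro n
  induction n with
  | zero =>
    intro k i
    match k with
    | 0 => rw [pB_zero_zero, Polynomial.coeff_one]; split_ifs <;> norm_num
    | 1 => rw [pB_zero_one, Polynomial.coeff_X]; split_ifs <;> norm_num
    | (k+2) => rw [pB_zero_big]; simp
  | succ n ih =>
    intro k i
    rcases Nat.lt_or_ge (n+2) k with h | h
    · rw [pB_big _ _ h]; simp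
    rcases Nat.eq_or_lt_of_le h with rfl | h
    · rw [pB_succ_last]
      rcases i with _ | i
      · simp [Polynomial.mul_coeff_zero]
      · rw [Polynomial.coeff_X_mul, Polynomial.finset_sum_coeff]
        exact Finset.sum_nonneg fun j _ => ih j i
    rcases Nat.eq_zero_or_pos k with rfl | hk
    · rw [pB_succ_zero, Polynomial.finset_sum_coeff]
      exact Finset.sum_nonneg fun j _ => ih j i
    rcases i with _ | i
    · rw [coeff_mid_zero n k hk (by omega)]
      have h2 : 0 ≤ ∑ j ∈ Finset.Icc k (n+1), (pB n j).coeff 0 :=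
        Finset.sum_nonneg fun j _ => ih j 0
      positivity
    · rw [coeff_mid_succ n k hk (by omega)]
      have h1 : 0 ≤ ∑ j ∈ Finset.range k, (pB n j).coeff i :=
        Finset.sum_nonneg fun j _ => ih j i
      have h2 : 0 ≤ ∑ j ∈ Finset.Icc k (n+1), (pB n j).coeff (i+1) :=
        Finset.sum_nonneg fun j _ => ih j (i+1)
      positivity

lemma sum_reflect (f : ℕ → ℝ) (k n : ℕ) (hk : k ≤ n+1) :
    ∑ j ∈ Finset.range k, f (n+1-j) = ∑ j ∈ Finset.Icc (n+2-k) (n+1), f j := by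
  apply Finset.sum_nbij' (i := fun j => n+1-j) (j := fun j => n+1-j)
  · intro a ha; simp only [Finset.mem_range] at ha; simp only [Finset.mem_Icc]; omega
  · intro a ha; simp only [Finset.mem_Icc] at ha; simp only [Finset.mem_range]; omega
  · intro a ha; simp only [Finset.mem_range] at ha; omega
  · intro a ha; simp only [Finset.mem_Icc] at ha; omega
  · intro a ha; rfl

lemma pB_symm : ∀ n k i, k ≤ n+1 → i ≤ n+1 →
    (pB n k).coeff i = (pB n (n+1-k)).coeff (n+1-i) := by
  intro n
  induction n with
  | zero =>
    intro k i hk hi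
    interval_cases k <;> interval_cases i <;>
      simp [pB_zero_zero, pB_zero_one, Polynomial.coeff_one, Polynomial.coeff_X]
  | succ n ih =>
    intro k i hk hi
    have claim1 : ∀ k i, 1 ≤ k → k ≤ n+1 → i ≤ n+1 →
        ∑ j ∈ Finset.range k, (pB n j).coeff i
          = ∑ j ∈ Finset.Icc (n+2-k) (n+1), (pB n j).coeff (n+1-i) := by
      intro k i h1 h2 hi
      rw [← sum_reflect (fun j => (pB n j).coeff (n+1-i)) k n (by omega)]
      apply Finset.sum_congr rfl
      intro j hj
      simp only [Finset.mem_range] at hj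
      exact ih j i (by omega) hi
    have Tpal : ∀ i, i ≤ n+1 →
        ∑ j ∈ Finset.range (n+2), (pB n j).coeff i
          = ∑ j ∈ Finset.range (n+2), (pB n j).coeff (n+1-i) := by
      intro i hi
      rw [← Finset.sum_range_reflect (fun j => (pB n j).coeff (n+1-i)) (n+2)]
      apply Finset.sum_congr rfl
      intro j hj
      simp only [Finset.mem_range] at hj
      exact ih j i (by omega) hi
    -- coefficient of T beyond n+1 is zero
    have Tzero : ∀ i, n+1 < i → ∑ j ∈ Finset.range (n+2), (pB n j).coeff i = 0 := by
      intro i hi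
      exact Finset.sum_eq_zero fun j _ => pB_coeff_zero n j i hi
    rcases Nat.eq_zero_or_pos k with rfl | hk1
    · -- k = 0
      rw [pB_succ_zero, Polynomial.finset_sum_coeff]
      rw [show n+2-0 = n+2 from rfl, pB_succ_last]
      rcases Nat.eq_or_lt_of_le hi with rfl | hi'
      · rw [Nat.sub_self, Polynomial.mul_coeff_zero, Polynomial.coeff_X_zero, zero_mul]
        exact Tzero _ (by omega)
      · rw [show n+2-i = (n+1-i)+1 by omega, Polynomial.coeff_X_mul, Polynomial.finset_sum_coeff]
        exact Tpal i (by omega)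
    rcases Nat.eq_or_lt_of_le hk with rfl | hk2
    · -- k = n+2
      rw [Nat.sub_self, pB_succ_last, pB_succ_zero, Polynomial.finset_sum_coeff]
      rcases Nat.eq_zero_or_pos i with rfl | hi1
      · rw [Polynomial.mul_coeff_zero, Polynomial.coeff_X_zero, zero_mul, Nat.sub_zero]
        exact (Tzero _ (by omega)).symm
      · obtain ⟨i, rfl⟩ : ∃ i', i = i'+1 := ⟨i-1, by omega⟩
        rw [Polynomial.coeff_X_mul, Polynomial.finset_sum_coeff, show n+2-(i+1) = n+1-i by omega]
        exact Tpal i (by omega)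
    · -- middle k
      have hk' : 1 ≤ n+2-k ∧ n+2-k ≤ n+1 := by omega
      rcases Nat.eq_zero_or_pos i with rfl | hi1
      · rw [coeff_mid_zero n k hk1 (by omega), Nat.sub_zero,
          coeff_mid_succ n (n+2-k) hk'.1 hk'.2 (n+1)]
        rw [Finset.sum_eq_zero fun j _ => pB_coeff_zero n j (n+2) (by omega)]
        rw [claim1 (n+2-k) (n+1) hk'.1 hk'.2 (le_refl _)]
        rw [show n+2-(n+2-k) = k by omega, Nat.sub_self]
        ring
      obtain ⟨i, rfl⟩ : ∃ i', i = i'+1 := ⟨i-1, by omega⟩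
      rcases Nat.eq_or_lt_of_le hi with h | hlt
      · -- i = n+2
        have hi' : i = n+1 := by omega
        subst hi'
        rw [coeff_mid_succ n k hk1 (by omega), show n+2-(n+2) = 0 by omega,
          coeff_mid_zero n (n+2-k) hk'.1 hk'.2]
        rw [Finset.sum_eq_zero fun j _ => pB_coeff_zero n j (n+2) (by omega)]
        rw [claim1 k (n+1) hk1 (by omega) (le_refl _), Nat.sub_self]
        ring
      · -- i+1 ≤ n+1
        rw [coeff_mid_succ n k hk1 (by omega),
          show n+2-(i+1) = (n+1-(i+1))+1 by omega,
          coeff_mid_succ n (n+2-k) hk'.1 hk'.2 (n+1-(i+1))]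
        rw [claim1 k i hk1 (by omega) (by omega)]
        rw [claim1 (n+2-k) (n+1-(i+1)) hk'.1 hk'.2 (by omega)]
        rw [show n+2-k = n+2-k from rfl]
        rw [show n+1-i = (n+1-(i+1))+1 by omega]
        rw [show n+2-(n+2-k) = k by omega,
          show n+1-(n+1-(i+1)) = i+1 by omega]
        ring

lemma sum_reflect' (f : ℕ → ℝ) (k n : ℕ) (hk : k ≤ n+1) :
    ∑ j ∈ Finset.Icc k (n+1), f (n+1-j) = ∑ j ∈ Finset.range (n+2-k), f j := by
  apply Finset.sum_nbij' (i := fun j => n+1-j) (j := fun j => n+1-j)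
  · intro a ha; simp only [Finset.mem_Icc] at ha; simp only [Finset.mem_range]; omega
  · intro a ha; simp only [Finset.mem_range] at ha; simp only [Finset.mem_Icc]; omega
  · intro a ha; simp only [Finset.mem_Icc] at ha; omega
  · intro a ha; simp only [Finset.mem_range] at ha; omega
  · intro a ha; rfl

lemma Tpal (n i : ℕ) (hi : i ≤ n+1) :
    ∑ j ∈ Finset.range (n+2), (pB n j).coeff i
      = ∑ j ∈ Finset.range (n+2), (pB n j).coeff (n+1-i) := by
  rw [← Finset.sum_range_reflect (fun j => (pB n j).coeff (n+1-i)) (n+2)]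
  apply Finset.sum_congr rfl
  intro j hj
  simp only [Finset.mem_range] at hj
  exact pB_symm n j i (by omega) hi

/-- the peak position -/
def qq (n k : ℕ) : ℕ := if n % 2 = 1 then (n+1)/2 else if k ≤ n/2 then n/2 else n/2+1

lemma qq_ge (n k : ℕ) : (n+1)/2 ≤ qq n k := by unfold qq; split_ifs <;> omega
lemma qq_le (n k : ℕ) : qq n k ≤ (n+1)/2 + 1 := by unfold qq; split_ifs <;> omega
lemma qq_add (n k : ℕ) (hk : k ≤ n+1) : qq n k + qq n (n+1-k) = n+1 := by
  unfold qq; split_ifs <;> omega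
lemma qq_succ_le (n k : ℕ) : qq (n+1) k ≤ (n+1)/2 + 1 := by unfold qq; split_ifs <;> omega
lemma qq_even_lo (n k : ℕ) (h : n % 2 = 0) (hk : k ≤ n/2) : qq n k = n/2 := by
  unfold qq; split_ifs <;> omega
lemma qq_even_hi (n k : ℕ) (h : n % 2 = 0) (hk : n/2 + 1 ≤ k) : qq n k = n/2 + 1 := by
  unfold qq; split_ifs <;> omega
lemma qq_succ_cases (n k : ℕ) (h : qq (n+1) k = (n+1)/2 + 1) :
    n % 2 = 0 ∨ (n % 2 = 1 ∧ (n+1)/2 + 1 ≤ k) := by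
  unfold qq at h; split_ifs at h <;> omega

lemma dec_of_inc (n : ℕ)
    (hinc : ∀ k, k ≤ n+1 → ∀ i, i+1 ≤ qq n k → (pB n k).coeff i ≤ (pB n k).coeff (i+1)) :
    ∀ k, k ≤ n+1 → ∀ i, qq n k ≤ i → (pB n k).coeff (i+1) ≤ (pB n k).coeff i := by
  intro k hk i hi
  rcases Nat.lt_or_ge (n+1) (i+1) with h | h
  · rw [pB_coeff_zero n k (i+1) (by omega)]
    exact pB_coeff_nonneg n k i
  · rw [pB_symm n k (i+1) hk (by omega), pB_symm n k i hk (by omega),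
      show n+1-i = (n+1-(i+1))+1 by omega]
    have hadd := qq_add n k hk
    exact hinc (n+1-k) (by omega) (n+1-(i+1)) (by omega)

lemma pB_inc : ∀ n k, k ≤ n+1 → ∀ i, i+1 ≤ qq n k →
    (pB n k).coeff i ≤ (pB n k).coeff (i+1) := by
  intro n
  induction n with
  | zero =>
    intro k hk i hi
    interval_cases k
    · unfold qq at hi; simp at hi
    · have hi0 : i = 0 := by unfold qq at hi; simp at hi; omega
      subst hi0
      rw [pB_zero_one, Polynomial.coeff_X, Polynomial.coeff_X, if_neg (by omega), if_pos rfl]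
      norm_num
  | succ n ih =>
    have ihdec := dec_of_inc n ih
    intro k hk i hi
    have hile : i + 1 ≤ (n+1)/2 + 1 := le_trans hi (qq_succ_le n k)
    set m := (n+1)/2 with hm
    have incP : ∀ j, j ≤ n+1 → ∀ i, i+1 ≤ m → (pB n j).coeff i ≤ (pB n j).coeff (i+1) :=
      fun j hj i hi => ih j hj i (le_trans hi (qq_ge n j))
    have decP : ∀ j, j ≤ n+1 → ∀ i, m+1 ≤ i → (pB n j).coeff (i+1) ≤ (pB n j).coeff i :=
      fun j hj i hi => ihdec j hj i (le_trans (qq_le n j) hi)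
    have nonneg := pB_coeff_nonneg
    rcases Nat.lt_or_ge i m with hgen | hsp
    · -- generic part : i + 1 ≤ m
      have hgen : i + 1 ≤ m := hgen
      rcases Nat.eq_zero_or_pos k with rfl | hk1
      · rw [pB_succ_zero, Polynomial.finset_sum_coeff, Polynomial.finset_sum_coeff]
        exact Finset.sum_le_sum fun j hj =>
          incP j (by simp only [Finset.mem_range] at hj; omega) i hgen
      rcases Nat.eq_or_lt_of_le hk with rfl | hk2
      · rw [pB_succ_last]
        rcases Nat.eq_zero_or_pos i with rfl | hi1
        · rw [Polynomial.mul_coeff_zero, Polynomial.coeff_X_zero, zero_mul, Polynomial.coeff_X_mul, Polynomial.finset_sum_coeff]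
          exact Finset.sum_nonneg fun j _ => nonneg n j 0
        · obtain ⟨i, rfl⟩ : ∃ i', i = i'+1 := ⟨i-1, by omega⟩
          rw [Polynomial.coeff_X_mul, Polynomial.coeff_X_mul, Polynomial.finset_sum_coeff, Polynomial.finset_sum_coeff]
          exact Finset.sum_le_sum fun j hj =>
            incP j (by simp only [Finset.mem_range] at hj; omega) i (by omega)
      · -- middle k
        have hk2' : k ≤ n+1 := by omega
        rcases Nat.eq_zero_or_pos i with rfl | hi1
        · rw [coeff_mid_zero n k hk1 hk2', coeff_mid_succ n k hk1 hk2' 0]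
          have h1 : 0 ≤ ∑ j ∈ Finset.range k, (pB n j).coeff 0 :=
            Finset.sum_nonneg fun j _ => nonneg n j 0
          have h2 : ∑ j ∈ Finset.Icc k (n+1), (pB n j).coeff 0
              ≤ ∑ j ∈ Finset.Icc k (n+1), (pB n j).coeff 1 :=
            Finset.sum_le_sum fun j hj =>
              incP j (by simp only [Finset.mem_Icc] at hj; omega) 0 (by omega)
          linarith
        · obtain ⟨i, rfl⟩ : ∃ i', i = i'+1 := ⟨i-1, by omega⟩
          rw [coeff_mid_succ n k hk1 hk2' i, coeff_mid_succ n k hk1 hk2' (i+1)]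
          have h1 : ∑ j ∈ Finset.range k, (pB n j).coeff i
              ≤ ∑ j ∈ Finset.range k, (pB n j).coeff (i+1) :=
            Finset.sum_le_sum fun j hj =>
              incP j (by simp only [Finset.mem_range] at hj; omega) i (by omega)
          have h2 : ∑ j ∈ Finset.Icc k (n+1), (pB n j).coeff (i+1)
              ≤ ∑ j ∈ Finset.Icc k (n+1), (pB n j).coeff (i+2) :=
            Finset.sum_le_sum fun j hj =>
              incP j (by simp only [Finset.mem_Icc] at hj; omega) (i+1) (by omega)
          linarith
    · -- special point : i = m and qq (n+1) k = m + 1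
      have him : i = m := by omega
      subst him
      have hq : qq (n+1) k = m + 1 := by have := qq_succ_le n k; omega
      have hpar := qq_succ_cases n k hq
      -- case on k
      rcases Nat.eq_zero_or_pos k with rfl | hk1
      · -- k = 0 : forces n even
        have hpar0 : n % 2 = 0 := by
          rcases hpar with h | ⟨h1, h2⟩
          · exact h
          · omega
        rw [pB_succ_zero, Polynomial.finset_sum_coeff, Polynomial.finset_sum_coeff]
        have hT := Tpal n m (by omega)
        rw [show n+1-m = m+1 by omega] at hT
        exact le_of_eq hT
      rcases Nat.eq_or_lt_of_le hk with rfl | hk2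
      · -- k = n+2
        rw [pB_succ_last]
        rcases Nat.eq_zero_or_pos m with hm0 | hm1
        · rw [hm0, Polynomial.mul_coeff_zero, Polynomial.coeff_X_zero, zero_mul, Polynomial.coeff_X_mul, Polynomial.finset_sum_coeff]
          exact Finset.sum_nonneg fun j _ => nonneg n j 0
        · obtain ⟨m', hme⟩ : ∃ m', m = m'+1 := ⟨m-1, by omega⟩
          rw [hme, Polynomial.coeff_X_mul, Polynomial.coeff_X_mul, Polynomial.finset_sum_coeff, Polynomial.finset_sum_coeff]
          exact Finset.sum_le_sum fun j hj =>
            incP j (by simp only [Finset.mem_range] at hj; omega) m' (by omega)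
      · -- middle k
        have hk2' : k ≤ n+1 := by omega
        rcases Nat.eq_zero_or_pos m with hm0 | hm1
        · -- m = 0 forces n = 0, k = 1
          have hn0 : n = 0 := by
            rcases hpar with h | ⟨h1, h2⟩ <;> omega
          subst hn0
          have hk1' : k = 1 := by omega
          subst hk1'
          rw [hm0, coeff_mid_zero 0 1 le_rfl le_rfl, Finset.Icc_self,
            Finset.sum_singleton, pB_zero_one, Polynomial.coeff_X_zero, mul_zero]
          exact nonneg 1 1 1
        obtain ⟨m', hme⟩ : ∃ m', m = m'+1 := ⟨m-1, by omega⟩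
        rw [hme, coeff_mid_succ n k hk1 hk2' m', coeff_mid_succ n k hk1 hk2' (m'+1),
          show m'+1+1 = m'+2 from rfl]
        have hsub1 : ∑ j ∈ Finset.Icc k (n+1), ((pB n j).coeff (m'+1) - (pB n j).coeff (m'+2))
            = ∑ j ∈ Finset.Icc k (n+1), (pB n j).coeff (m'+1)
              - ∑ j ∈ Finset.Icc k (n+1), (pB n j).coeff (m'+2) :=
          Finset.sum_sub_distrib _ _
        have hsub2 : ∑ j ∈ Finset.range k, ((pB n j).coeff (m'+1) - (pB n j).coeff m')
            = ∑ j ∈ Finset.range k, (pB n j).coeff (m'+1)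
              - ∑ j ∈ Finset.range k, (pB n j).coeff m' :=
          Finset.sum_sub_distrib _ _
        have key : ∑ j ∈ Finset.Icc k (n+1), ((pB n j).coeff (m'+1) - (pB n j).coeff (m'+2))
            ≤ ∑ j ∈ Finset.range k, ((pB n j).coeff (m'+1) - (pB n j).coeff m') := by
          rcases hpar with hpar | ⟨hpar, hklarge⟩
          · -- n even, n = 2m' + 2
            have hn : n = 2*m' + 2 := by omega
            rcases le_or_gt k (m'+2) with hkle | hkge
            · -- B : k ≤ m + 1
              have step1 : ∑ j ∈ Finset.Icc k (n+1),
                  ((pB n j).coeff (m'+1) - (pB n j).coeff (m'+2))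
                  = ∑ j ∈ Finset.range (n+2-k),
                      ((pB n j).coeff (m'+2) - (pB n j).coeff (m'+1)) := by
                rw [← sum_reflect' (fun j => (pB n j).coeff (m'+2) - (pB n j).coeff (m'+1))
                  k n hk2']
                apply Finset.sum_congr rfl
                intro j hj
                simp only [Finset.mem_Icc] at hj
                rw [pB_symm n j (m'+1) (by omega) (by omega),
                  pB_symm n j (m'+2) (by omega) (by omega),
                  show n+1-(m'+1) = m'+2 by omega, show n+1-(m'+2) = m'+1 by omega]
              have step2 : ∑ j ∈ Finset.range (n+2-k),
                  ((pB n j).coeff (m'+2) - (pB n j).coeff (m'+1))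
                  = ∑ j ∈ Finset.range k,
                      ((pB n j).coeff (m'+2) - (pB n j).coeff (m'+1))
                    + ∑ j ∈ Finset.Ico k (n+2-k),
                      ((pB n j).coeff (m'+2) - (pB n j).coeff (m'+1)) := by
                rw [Finset.range_eq_Ico,
                  ← Finset.sum_Ico_consecutive _ (Nat.zero_le k) (show k ≤ n+2-k by omega), Finset.range_eq_Ico]
              have step3 : ∑ j ∈ Finset.Ico k (n+2-k),
                  ((pB n j).coeff (m'+2) - (pB n j).coeff (m'+1)) = 0 := by
                apply Finset.sum_involution (g := fun j _ => n+1-j)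
                · intro a ha
                  simp only [Finset.mem_Ico] at ha
                  have e1 := pB_symm n a (m'+1) (by omega) (by omega)
                  have e2 := pB_symm n a (m'+2) (by omega) (by omega)
                  rw [show n+1-(m'+1) = m'+2 by omega] at e1
                  rw [show n+1-(m'+2) = m'+1 by omega] at e2
                  rw [e1, e2]
                  ring
                · intro a ha _
                  simp only [Finset.mem_Ico] at ha
                  omega
                · intro a ha
                  simp only [Finset.mem_Ico] at ha ⊢
                  omega
                · intro a ha
                  simp only [Finset.mem_Ico] at ha
                  omega
              have step4 : ∑ j ∈ Finset.range k,
                  ((pB n j).coeff (m'+2) - (pB n j).coeff (m'+1))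
                  ≤ ∑ j ∈ Finset.range k,
                      ((pB n j).coeff (m'+1) - (pB n j).coeff m') := by
                apply Finset.sum_le_sum
                intro j hj
                simp only [Finset.mem_range] at hj
                have hjq : qq n j = m'+1 := by
                  rw [qq_even_lo n j hpar (by omega)]; omega
                have d1 : (pB n j).coeff (m'+2) ≤ (pB n j).coeff (m'+1) :=
                  ihdec j (by omega) (m'+1) (by omega)
                have d2 : (pB n j).coeff m' ≤ (pB n j).coeff (m'+1) :=
                  incP j (by omega) m' (by omega)
                linarith
              rw [step1, step2, step3, add_zero]
              exact step4
            · -- C : k ≥ m + 2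
              have hwnn : ∀ j, j ≤ n+1 →
                  0 ≤ (pB n j).coeff (m'+2) - (pB n j).coeff (m'+3) := by
                intro j hj
                have := decP j hj (m'+2) (by omega)
                linarith [this]
              have step1 : ∑ j ∈ Finset.range k,
                  ((pB n j).coeff (m'+1) - (pB n j).coeff m')
                  = ∑ j ∈ Finset.Icc (n+2-k) (n+1),
                      ((pB n j).coeff (m'+2) - (pB n j).coeff (m'+3)) := by
                rw [← sum_reflect (fun j => (pB n j).coeff (m'+2) - (pB n j).coeff (m'+3))
                  k n hk2']
                apply Finset.sum_congr rfl
                intro j hj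
                simp only [Finset.mem_range] at hj
                rw [pB_symm n j (m'+1) (by omega) (by omega),
                  pB_symm n j m' (by omega) (by omega),
                  show n+1-(m'+1) = m'+2 by omega, show n+1-m' = m'+3 by omega]
              have step2 : ∑ j ∈ Finset.Icc (n+2-k) (n+1),
                  ((pB n j).coeff (m'+2) - (pB n j).coeff (m'+3))
                  = ∑ j ∈ Finset.Ico (n+2-k) k,
                      ((pB n j).coeff (m'+2) - (pB n j).coeff (m'+3))
                    + ∑ j ∈ Finset.Icc k (n+1),
                      ((pB n j).coeff (m'+2) - (pB n j).coeff (m'+3)) := by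
                rw [← Finset.Ico_add_one_right_eq_Icc (n+2-k) (n+1), ← Finset.Ico_add_one_right_eq_Icc k (n+1),
                  ← Finset.sum_Ico_consecutive _ (show n+2-k ≤ k by omega)
                    (show k ≤ n+1+1 by omega)]
              have step3 : 0 ≤ ∑ j ∈ Finset.Ico (n+2-k) k,
                  ((pB n j).coeff (m'+2) - (pB n j).coeff (m'+3)) := by
                apply Finset.sum_nonneg
                intro j hj
                simp only [Finset.mem_Ico] at hj
                exact hwnn j (by omega)
              have step4 : ∑ j ∈ Finset.Icc k (n+1),
                  ((pB n j).coeff (m'+1) - (pB n j).coeff (m'+2))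
                  ≤ ∑ j ∈ Finset.Icc k (n+1),
                      ((pB n j).coeff (m'+2) - (pB n j).coeff (m'+3)) := by
                apply Finset.sum_le_sum
                intro j hj
                simp only [Finset.mem_Icc] at hj
                have hjq : qq n j = m'+2 := by
                  rw [qq_even_hi n j hpar (by omega)]; omega
                have d1 : (pB n j).coeff (m'+1) ≤ (pB n j).coeff (m'+2) :=
                  ih j (by omega) (m'+1) (by omega)
                have d2 := hwnn j (by omega)
                linarith
              rw [step1, step2]
              linarith
          · -- A : n odd, k ≥ m+1
            have hn : n = 2*m' + 1 := by omega
            have step1 : ∑ j ∈ Finset.Icc k (n+1),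
                ((pB n j).coeff (m'+1) - (pB n j).coeff (m'+2))
                = ∑ j ∈ Finset.range (n+2-k),
                    ((pB n j).coeff (m'+1) - (pB n j).coeff m') := by
              rw [← sum_reflect' (fun j => (pB n j).coeff (m'+1) - (pB n j).coeff m')
                k n hk2']
              apply Finset.sum_congr rfl
              intro j hj
              simp only [Finset.mem_Icc] at hj
              rw [pB_symm n j (m'+1) (by omega) (by omega),
                pB_symm n j (m'+2) (by omega) (by omega),
                show n+1-(m'+1) = m'+1 by omega, show n+1-(m'+2) = m' by omega]
            have step2 : ∑ j ∈ Finset.range (n+2-k),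
                ((pB n j).coeff (m'+1) - (pB n j).coeff m')
                ≤ ∑ j ∈ Finset.range k,
                    ((pB n j).coeff (m'+1) - (pB n j).coeff m') := by
              apply Finset.sum_le_sum_of_subset_of_nonneg
              · apply Finset.range_subset_range.mpr
                omega
              · intro j hj _
                simp only [Finset.mem_range] at hj
                have := incP j (by omega) m' (by omega)
                linarith
            rw [step1]
            exact step2
        rw [hsub1, hsub2] at key
        linarith

/-- The coefficient sequence `(a_0, …, a_{n+1})` of `p^B_{n,k}` is unimodal with a peak at
position `p`, where `p = (n+1)/2` if `n` is odd, `p = n/2` if `n` is even and `k ≤ n/2`,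
and `p = n/2 + 1` if `n` is even and `k ≥ n/2 + 1`. -/
theorem pB_unimodal (n k : ℕ) (hk : k ≤ n + 1) (p : ℕ)
    (hp : (Odd n → p = (n + 1) / 2) ∧
          (Even n → k ≤ n / 2 → p = n / 2) ∧
          (Even n → n / 2 + 1 ≤ k → p = n / 2 + 1)) :
    (∀ i < p, (pB n k).coeff i ≤ (pB n k).coeff (i + 1)) ∧
      (∀ i, p ≤ i → i ≤ n → (pB n k).coeff (i + 1) ≤ (pB n k).coeff i) := by
  have hpq : p = qq n k := by
    rcases Nat.even_or_odd n with he | ho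
    · have he' : n % 2 = 0 := Nat.even_iff.mp he
      rcases le_or_gt k (n/2) with h | h
      · rw [hp.2.1 he h, qq_even_lo n k he' h]
      · rw [hp.2.2 he (by omega), qq_even_hi n k he' (by omega)]
    · have ho' : n % 2 = 1 := Nat.odd_iff.mp ho
      rw [hp.1 ho]
      unfold qq
      rw [if_pos ho']
  subst hpq
  constructor
  · intro i hi
    exact pB_inc n k hk i (by omega)
  · intro i hi _
    exact dec_of_inc n (pB_inc n) k hk i hi
end
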